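/- Let g, h : ℤ² → ℤ be finitely supported functions, and let (a,b) be a lattice direction. If g has zero line sums along all lattice lines with direction (a,b), then the function whose generating polynomial is the product G_g(x,y)·G_h(x,y) also has zero line sums along all lattice lines with direction (a,b). Consequently, for a set S of lattice directions, the function generated by F_S(x,y) = ∏_{(a,b)∈S} f_{(a,b)}(x,y) has zero line sums along all lines with directions in S (it is an S-ghost). -/

import Mathlib

/-- The line sum of a finitely supported function on `ℤ²` along the lattice line
`a·y = b·x + t`. -/
def lineSum (a b t : ℤ) (g : AddMonoidAlgebra ℤ (ℤ × ℤ)) : ℤ :=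
  ∑ p ∈ g.coeff.support.filter (fun p => a * p.2 = b * p.1 + t), g.coeff p

/-- The element of `ℤ[ℤ²]` generated by the binomial `f_{(a,b)}`:
`x^a y^b - 1` if `b ≥ 0`, and `x^a - y^{-b}` if `b < 0`. -/
noncomputable def dirElt (a b : ℤ) : AddMonoidAlgebra ℤ (ℤ × ℤ) :=
  if 0 ≤ b then AddMonoidAlgebra.single (a, b) 1 - AddMonoidAlgebra.single (0, 0) 1
  else AddMonoidAlgebra.single (a, 0) 1 - AddMonoidAlgebra.single (0, -b) 1

/-- Projection `(i,j) ↦ a*j - b*i` as an additive monoid hom. -/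
def proj (a b : ℤ) : (ℤ × ℤ) →+ ℤ where
  toFun p := a * p.2 - b * p.1
  map_zero' := by simp
  map_add' p q := by simp [Prod.snd_add, Prod.fst_add]; ring

lemma lineSum_eq (a b t : ℤ) (g : AddMonoidAlgebra ℤ (ℤ × ℤ)) :
    lineSum a b t g = Finsupp.mapDomain (proj a b) g.coeff t := by
  rw [lineSum, Finsupp.mapDomain, Finsupp.sum_apply, Finsupp.sum, Finset.sum_filter]
  refine Finset.sum_congr rfl fun p _ => ?_
  have h : (a * p.2 = b * p.1 + t) ↔ (proj a b p = t) := by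
    simp only [proj, AddMonoidHom.coe_mk, ZeroHom.coe_mk]; omega
  rw [Finsupp.single_apply]
  simp only [h]

lemma key (a b : ℤ) (g h : AddMonoidAlgebra ℤ (ℤ × ℤ))
    (hg : ∀ t : ℤ, lineSum a b t g = 0) : ∀ t : ℤ, lineSum a b t (g * h) = 0 := by
  have hzero : Finsupp.mapDomain (proj a b) g.coeff = 0 := by
    ext t; rw [← lineSum_eq]; exact hg t
  intro t
  rw [lineSum_eq]
  have : Finsupp.mapDomain (α := ℤ × ℤ) (M := ℤ) (proj a b) (g * h).coeff =
      (AddMonoidAlgebra.mapDomainRingHom ℤ (proj a b) g *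
      AddMonoidAlgebra.mapDomainRingHom ℤ (proj a b) h).coeff := by
    rw [← map_mul]; rfl
  rw [this]
  have : (AddMonoidAlgebra.mapDomainRingHom ℤ (proj a b)) g = 0 := AddMonoidAlgebra.coeff_injective hzero
  rw [this, zero_mul]
  rfl

lemma lineSum_dirElt (a b t : ℤ) : lineSum a b t (dirElt a b) = 0 := by
  rw [lineSum_eq]
  have : Finsupp.mapDomain (α := ℤ × ℤ) (M := ℤ) (proj a b) (dirElt a b).coeff = 0 := by
    unfold dirElt
    split_ifs with hb
    · show ((AddMonoidAlgebra.mapDomainRingHom ℤ (proj a b))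
        (AddMonoidAlgebra.single (a, b) 1 - AddMonoidAlgebra.single (0, 0) 1)).coeff = 0
      rw [map_sub]
      show Finsupp.mapDomain (proj a b) (Finsupp.single (a, b) 1) -
        Finsupp.mapDomain (proj a b) (Finsupp.single ((0 : ℤ), (0 : ℤ)) 1) = 0
      rw [Finsupp.mapDomain_single, Finsupp.mapDomain_single]
      have : proj a b (a, b) = proj a b (0, 0) := by
        simp only [proj, AddMonoidHom.coe_mk, ZeroHom.coe_mk]; ring
      rw [this, sub_self]
    · show ((AddMonoidAlgebra.mapDomainRingHom ℤ (proj a b))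
        (AddMonoidAlgebra.single (a, 0) 1 - AddMonoidAlgebra.single (0, -b) 1)).coeff = 0
      rw [map_sub]
      show Finsupp.mapDomain (proj a b) (Finsupp.single (a, (0 : ℤ)) 1) -
        Finsupp.mapDomain (proj a b) (Finsupp.single ((0 : ℤ), -b) 1) = 0
      rw [Finsupp.mapDomain_single, Finsupp.mapDomain_single]
      have : proj a b (a, 0) = proj a b (0, -b) := by
        simp only [proj, AddMonoidHom.coe_mk, ZeroHom.coe_mk]; ring
      rw [this, sub_self]
  rw [this]; rfl

/-- If `g` has zero line sums along all lines with direction `(a,b)`, so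
does the function generated by the product `G_g · G_h`.  Consequently, for a set `S` of
lattice directions, the function generated by `F_S = ∏_{(a,b)∈S} f_{(a,b)}` has zero
line sums along all lines with directions in `S` (it is an `S`-ghost). -/
theorem stmt5 :
    (∀ (a b : ℤ), 0 ≤ a → IsCoprime a b → (b = 0 → a = 1) → (a = 0 → b = 1) →
      ∀ g h : AddMonoidAlgebra ℤ (ℤ × ℤ),
        (∀ t : ℤ, lineSum a b t g = 0) → ∀ t : ℤ, lineSum a b t (g * h) = 0) ∧
    (∀ (d : ℕ) (dir : Fin d → ℤ × ℤ),
      (∀ r, 0 ≤ (dir r).1) → (∀ r, IsCoprime (dir r).1 (dir r).2) →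
      (∀ r, (dir r).2 = 0 → (dir r).1 = 1) → (∀ r, (dir r).1 = 0 → (dir r).2 = 1) →
      ∀ (r : Fin d) (t : ℤ),
        lineSum (dir r).1 (dir r).2 t (∏ s, dirElt (dir s).1 (dir s).2) = 0) := by
  constructor
  · intro a b _ _ _ _ g h hg t
    exact key a b g h hg t
  · intro d dir _ _ _ _ r t
    rw [← Finset.mul_prod_erase Finset.univ _ (Finset.mem_univ r)]
    exact key (dir r).1 (dir r).2 _ _ (fun t => lineSum_dirElt _ _ t) t
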